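/- Let q > 1, let w₀ be a strictly positive density on ℝ², let (θ_i)_{i≥1} be positive reals with ∑_{i≥1} θ_i = 1, and let f = ∑_{i≥1} f_i·1_{[i,i+1)} and g = ∑_{i≥1} g_i·1_{[i,i+1)} be step functions with f(x), g(y) ∈ L^q(w₀), satisfying ∑_{i≥1} |f_i|^q θ_i = ∑_{i≥1} |g_i|^q θ_i = ∞, ∑_{i≥1} |f_i| θ_i < ∞, ∑_{i≥1} |g_i| θ_i < ∞, and ∑_{i≥1} |f_i + g_i|^q θ_i < ∞. Then for every α ∈ (0,1) the function w(x,y) := α·w₀(x,y) + (1−α)·∑_{i≥1} θ_i·1_{[i,i+1)}(x)·1_{[i,i+1)}(y) is a strictly positive density on ℝ², f(x) and g(y) belong to L^1(w), the function (x,y) ↦ f(x)+g(y) belongs to L^q(w), but f(x) ∉ L^q(w) and g(y) ∉ L^q(w); hence w does not satisfy the Smirnov property for exponent q. -/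

import Mathlib

open MeasureTheory
open scoped ENNReal

noncomputable section

/-- The weighted measure `w(x,y)dxdy` on `ℝ²`. -/
def wMeasure2 (w : ℝ × ℝ → ℝ) : Measure (ℝ × ℝ) :=
  volume.withDensity (fun z => ENNReal.ofReal (w z))

/-- `w` is a strictly positive (probability) density on `ℝ²`. -/
def IsDensity2 (w : ℝ × ℝ → ℝ) : Prop :=
  Measurable w ∧ (∀ z, 0 < w z) ∧ (∫ z, w z) = 1

/-- The Smirnov property on `ℝ²` for exponent `q`: whenever `f(x)+g(y) ∈ L^q(w)` with
`f(x), g(y) ∈ L^1(w)`, then `f(x), g(y) ∈ L^q(w)`. -/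
def SmirnovProperty2 (w : ℝ × ℝ → ℝ) (q : ℝ) : Prop :=
  ∀ f g : ℝ → ℝ, Measurable f → Measurable g →
    MemLp (fun z : ℝ × ℝ => f z.1) 1 (wMeasure2 w) →
    MemLp (fun z : ℝ × ℝ => g z.2) 1 (wMeasure2 w) →
    MemLp (fun z : ℝ × ℝ => f z.1 + g z.2) (ENNReal.ofReal q) (wMeasure2 w) →
    MemLp (fun z : ℝ × ℝ => f z.1) (ENNReal.ofReal q) (wMeasure2 w) ∧
    MemLp (fun z : ℝ × ℝ => g z.2) (ENNReal.ofReal q) (wMeasure2 w)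

/-- The step function `∑_{i ≥ 1} c_i · 1_{[i, i+1)}`, with coefficients indexed so that
`c k` is the value on `[k+1, k+2)`. -/
def stepFun (c : ℕ → ℝ) (x : ℝ) : ℝ :=
  ∑' k : ℕ, c k * Set.indicator (Set.Ico ((k : ℝ) + 1) ((k : ℝ) + 2)) 1 x

/-- The diagonal density `∑_{i ≥ 1} θ_i · 1_{[i,i+1)}(x) · 1_{[i,i+1)}(y)`. -/
def diagDensity (θ : ℕ → ℝ) (z : ℝ × ℝ) : ℝ :=
  ∑' k : ℕ, θ k * Set.indicator (Set.Ico ((k : ℝ) + 1) ((k : ℝ) + 2)) 1 z.1 *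
    Set.indicator (Set.Ico ((k : ℝ) + 1) ((k : ℝ) + 2)) 1 z.2

def Iblk (k : ℕ) : Set ℝ := Set.Ico ((k : ℝ) + 1) ((k : ℝ) + 2)

lemma Ico_eq_Iblk (k : ℕ) : Set.Ico ((k : ℝ) + 1) ((k : ℝ) + 2) = Iblk k := rfl

def Qblk (k : ℕ) : Set (ℝ × ℝ) := (Iblk k) ×ˢ (Iblk k)

lemma Iblk_disj {j k : ℕ} {x : ℝ} (hj : x ∈ Iblk j) (hk : x ∈ Iblk k) : j = k := by
  simp only [Iblk, Set.mem_Ico] at hj hk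
  have h1 : (j : ℝ) < (k : ℝ) + 1 := by linarith
  have h2 : (k : ℝ) < (j : ℝ) + 1 := by linarith
  have h1' : j < k + 1 := by exact_mod_cast h1
  have h2' : k < j + 1 := by exact_mod_cast h2
  omega

lemma Qblk_disj {j k : ℕ} {z : ℝ × ℝ} (hj : z ∈ Qblk j) (hk : z ∈ Qblk k) : j = k :=
  Iblk_disj hj.1 hk.1

lemma measurableSet_Iblk (k : ℕ) : MeasurableSet (Iblk k) := measurableSet_Ico

lemma measurableSet_Qblk (k : ℕ) : MeasurableSet (Qblk k) :=
  (measurableSet_Iblk k).prod (measurableSet_Iblk k)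

lemma mem_Iblk_floor {x : ℝ} (hx : 1 ≤ x) : x ∈ Iblk (⌊x⌋.toNat - 1) := by
  have h1 : (1 : ℤ) ≤ ⌊x⌋ := by
    rw [Int.le_floor]; exact_mod_cast hx
  have hn : (((⌊x⌋.toNat : ℤ)) : ℝ) = ((⌊x⌋ : ℤ) : ℝ) := by
    congr 1; exact Int.toNat_of_nonneg (by omega)
  have hnn : 1 ≤ ⌊x⌋.toNat := by omega
  have hcast : ((⌊x⌋.toNat - 1 : ℕ) : ℝ) + 1 = ((⌊x⌋ : ℤ) : ℝ) := by
    rw [Nat.cast_sub hnn]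
    push_cast at hn ⊢
    linarith
  constructor
  · rw [hcast]; exact Int.floor_le x
  · have := Int.lt_floor_add_one x
    rw [show ((⌊x⌋.toNat - 1 : ℕ) : ℝ) + 2 = ((⌊x⌋ : ℤ) : ℝ) + 1 by linarith]
    exact this

lemma one_le_of_mem_Iblk {k : ℕ} {x : ℝ} (hx : x ∈ Iblk k) : 1 ≤ x := by
  have := hx.1
  have : (0 : ℝ) ≤ (k : ℝ) := Nat.cast_nonneg k
  simp only [Iblk, Set.mem_Ico] at hx
  linarith [hx.1]

lemma stepFun_eq_on {c : ℕ → ℝ} {k : ℕ} {x : ℝ} (hx : x ∈ Iblk k) : stepFun c x = c k := by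
  unfold stepFun
  simp only [Ico_eq_Iblk]
  rw [tsum_eq_single k]
  · rw [Set.indicator_of_mem hx, Pi.one_apply, mul_one]
  · intro j hj
    rw [Set.indicator_of_notMem, mul_zero]
    intro hxj
    exact hj (Iblk_disj hxj hx)

lemma stepFun_eq_zero {c : ℕ → ℝ} {x : ℝ} (h : ∀ k : ℕ, x ∉ Iblk k) : stepFun c x = 0 := by
  unfold stepFun
  simp only [Ico_eq_Iblk]
  have : ∀ k : ℕ, c k * (Iblk k).indicator 1 x = 0 := by
    intro k
    rw [Set.indicator_of_notMem (h k), mul_zero]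
  rw [tsum_congr this, tsum_zero]

lemma stepFun_repr (c : ℕ → ℝ) :
    stepFun c = Set.indicator (⋃ k : ℕ, Iblk k) (fun x => c (⌊x⌋.toNat - 1)) := by
  funext x
  by_cases hx : x ∈ ⋃ k : ℕ, Iblk k
  · obtain ⟨k, hk⟩ := Set.mem_iUnion.mp hx
    rw [Set.indicator_of_mem hx, stepFun_eq_on hk]
    congr 1
    exact Iblk_disj hk (mem_Iblk_floor (one_le_of_mem_Iblk hk))
  · rw [Set.indicator_of_notMem hx,
      stepFun_eq_zero (fun k hk => hx (Set.mem_iUnion.mpr ⟨k, hk⟩))]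

lemma measurable_stepFun (c : ℕ → ℝ) : Measurable (stepFun c) := by
  rw [stepFun_repr]
  exact Measurable.indicator
    ((measurable_from_top (f := fun n : ℤ => c (n.toNat - 1))).comp Int.measurable_floor)
    (MeasurableSet.iUnion measurableSet_Iblk)

lemma diag_eq_on {θ : ℕ → ℝ} {k : ℕ} {z : ℝ × ℝ} (hz : z ∈ Qblk k) : diagDensity θ z = θ k := by
  unfold diagDensity
  simp only [Ico_eq_Iblk]
  rw [tsum_eq_single k]
  · simp [Set.indicator_of_mem hz.1, Set.indicator_of_mem hz.2]
  · intro j hj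
    rw [Set.indicator_of_notMem (s := Iblk j) (f := (1 : ℝ → ℝ))
      (fun hxj => hj (Iblk_disj hxj hz.1)), mul_zero, zero_mul]

lemma diag_eq_zero {θ : ℕ → ℝ} {z : ℝ × ℝ} (h : ∀ k : ℕ, z ∉ Qblk k) : diagDensity θ z = 0 := by
  unfold diagDensity
  simp only [Ico_eq_Iblk]
  have : ∀ k : ℕ, θ k * (Iblk k).indicator 1 z.1 * (Iblk k).indicator 1 z.2 = 0 := by
    intro k
    by_cases h1 : z.1 ∈ Iblk k
    · have h2 : z.2 ∉ Iblk k := fun h2 => h k ⟨h1, h2⟩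
      rw [Set.indicator_of_notMem h2, mul_zero]
    · rw [Set.indicator_of_notMem h1, mul_zero, zero_mul]
  rw [tsum_congr this, tsum_zero]

lemma diag_repr (θ : ℕ → ℝ) :
    diagDensity θ = Set.indicator (⋃ k : ℕ, Qblk k) (fun z => θ (⌊z.1⌋.toNat - 1)) := by
  funext z
  by_cases hz : z ∈ ⋃ k : ℕ, Qblk k
  · obtain ⟨k, hk⟩ := Set.mem_iUnion.mp hz
    rw [Set.indicator_of_mem hz, diag_eq_on hk]
    congr 1
    exact Iblk_disj hk.1 (mem_Iblk_floor (one_le_of_mem_Iblk hk.1))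
  · rw [Set.indicator_of_notMem hz,
      diag_eq_zero (fun k hk => hz (Set.mem_iUnion.mpr ⟨k, hk⟩))]

lemma measurable_diagDensity (θ : ℕ → ℝ) : Measurable (diagDensity θ) := by
  rw [diag_repr]
  exact Measurable.indicator
    (((measurable_from_top (f := fun n : ℤ => θ (n.toNat - 1))).comp
      Int.measurable_floor).comp measurable_fst)
    (MeasurableSet.iUnion measurableSet_Qblk)

lemma diag_nonneg {θ : ℕ → ℝ} (hθ : ∀ k, 0 ≤ θ k) (z : ℝ × ℝ) : 0 ≤ diagDensity θ z := by
  rw [diag_repr]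
  exact Set.indicator_nonneg (fun x _ => hθ _) z

lemma ofReal_diag {θ : ℕ → ℝ} (hθ : ∀ k, 0 ≤ θ k) (z : ℝ × ℝ) :
    ENNReal.ofReal (diagDensity θ z) =
      ∑' k : ℕ, (Qblk k).indicator (fun _ => ENNReal.ofReal (θ k)) z := by
  by_cases hz : ∃ k : ℕ, z ∈ Qblk k
  · obtain ⟨k, hk⟩ := hz
    rw [diag_eq_on hk, (tsum_eq_single k (fun j hj => by
      rw [Set.indicator_of_notMem (fun hj' => hj (Qblk_disj hj' hk))]))]
    rw [Set.indicator_of_mem hk]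
  · push_neg at hz
    rw [diag_eq_zero hz, ENNReal.ofReal_zero]
    symm
    have : ∀ k : ℕ, (Qblk k).indicator (fun _ => ENNReal.ofReal (θ k)) z = 0 := fun k =>
      Set.indicator_of_notMem (hz k) _
    rw [tsum_congr this, tsum_zero]

lemma volume_Qblk (k : ℕ) : volume (Qblk k) = 1 := by
  rw [Qblk, Measure.volume_eq_prod, Measure.prod_prod]
  rw [Iblk, Real.volume_Ico]
  norm_num

lemma lint_diag (θ : ℕ → ℝ) (hθ : ∀ k, 0 ≤ θ k) (F : ℝ × ℝ → ℝ≥0∞) (hF : Measurable F)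
    (v : ℕ → ℝ≥0∞) (hv : ∀ k, ∀ z ∈ Qblk k, F z = v k) :
    ∫⁻ z, F z ∂(wMeasure2 (diagDensity θ)) = ∑' k : ℕ, v k * ENNReal.ofReal (θ k) := by
  unfold wMeasure2
  have hm : Measurable fun z => ENNReal.ofReal (diagDensity θ z) :=
    ENNReal.measurable_ofReal.comp (measurable_diagDensity θ)
  rw [lintegral_withDensity_eq_lintegral_mul _ hm hF]
  have hpt : ∀ z, (ENNReal.ofReal (diagDensity θ z)) * F z =
      ∑' k : ℕ, (Qblk k).indicator (fun z => ENNReal.ofReal (θ k) * F z) z := by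
    intro z
    rw [ofReal_diag hθ z, ← ENNReal.tsum_mul_right]
    congr 1
    funext k
    by_cases h : z ∈ Qblk k
    · rw [Set.indicator_of_mem h, Set.indicator_of_mem h]
    · rw [Set.indicator_of_notMem h, Set.indicator_of_notMem h, zero_mul]
  calc ∫⁻ z, ((fun z => ENNReal.ofReal (diagDensity θ z)) * F) z
      = ∫⁻ z, ∑' k : ℕ, (Qblk k).indicator (fun z => ENNReal.ofReal (θ k) * F z) z := by
        simp only [Pi.mul_apply]
        exact lintegral_congr hpt
    _ = ∑' k : ℕ, ∫⁻ z, (Qblk k).indicator (fun z => ENNReal.ofReal (θ k) * F z) z := by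
        exact lintegral_tsum (fun k =>
          ((hF.const_mul _).indicator (measurableSet_Qblk k)).aemeasurable)
    _ = ∑' k : ℕ, v k * ENNReal.ofReal (θ k) := by
        congr 1
        funext k
        rw [lintegral_indicator (measurableSet_Qblk k)]
        rw [setLIntegral_congr_fun (measurableSet_Qblk k)
          (fun z hz => by rw [hv k z hz])]
        rw [setLIntegral_const, volume_Qblk, mul_one, mul_comm]

lemma tsum_ofReal_lt_top_iff {a : ℕ → ℝ} (ha : ∀ k, 0 ≤ a k) :
    (∑' k, ENNReal.ofReal (a k)) < ⊤ ↔ Summable a := by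
  constructor
  · intro h
    have := ENNReal.summable_toReal h.ne
    simpa [ENNReal.toReal_ofReal (ha _)] using this
  · intro h
    rw [← ENNReal.ofReal_tsum_of_nonneg ha h]
    exact ENNReal.ofReal_lt_top

lemma memLp_diag_iff (θ : ℕ → ℝ) (hθ : ∀ k, 0 ≤ θ k) {q : ℝ} (hq : 0 < q)
    (u : ℝ × ℝ → ℝ) (hu : Measurable u) (v : ℕ → ℝ) (hv : ∀ k, ∀ z ∈ Qblk k, u z = v k) :
    MemLp u (ENNReal.ofReal q) (wMeasure2 (diagDensity θ)) ↔
      Summable (fun k => |v k| ^ q * θ k) := by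
  have hp0 : (ENNReal.ofReal q) ≠ 0 := by simp [ENNReal.ofReal_eq_zero, not_le, hq]
  have hpt : (ENNReal.ofReal q) ≠ ⊤ := ENNReal.ofReal_ne_top
  have hna : ∀ k, 0 ≤ |v k| ^ q * θ k := fun k =>
    mul_nonneg (Real.rpow_nonneg (abs_nonneg _) q) (hθ k)
  have key : (∫⁻ z, ‖u z‖ₑ ^ (ENNReal.ofReal q).toReal
      ∂(wMeasure2 (diagDensity θ))) = ∑' k : ℕ, ENNReal.ofReal (|v k| ^ q * θ k) := by
    rw [ENNReal.toReal_ofReal hq.le]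
    rw [lint_diag θ hθ _ ((hu.enorm).pow_const q)
      (fun k => ENNReal.ofReal (|v k| ^ q)) (fun k z hz => by
        rw [hv k z hz, Real.enorm_eq_ofReal_abs,
          ENNReal.ofReal_rpow_of_nonneg (abs_nonneg _) hq.le])]
    congr 1
    funext k
    rw [ENNReal.ofReal_mul (Real.rpow_nonneg (abs_nonneg _) q)]
  constructor
  · intro h
    have h2 := (eLpNorm_lt_top_iff_lintegral_rpow_enorm_lt_top hp0 hpt).mp h.2
    rw [key] at h2
    exact (tsum_ofReal_lt_top_iff hna).mp h2
  · intro h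
    refine ⟨hu.aestronglyMeasurable, ?_⟩
    rw [eLpNorm_lt_top_iff_lintegral_rpow_enorm_lt_top hp0 hpt, key]
    exact (tsum_ofReal_lt_top_iff hna).mpr h

lemma memLp_add_meas {α : Type*} [MeasurableSpace α] {μ ν : Measure α} {f : α → ℝ}
    {p : ℝ≥0∞} (hp0 : p ≠ 0) (hpt : p ≠ ⊤) (hm : AEStronglyMeasurable f (μ + ν))
    (h1 : MemLp f p μ) (h2 : MemLp f p ν) : MemLp f p (μ + ν) := by
  refine ⟨hm, ?_⟩
  rw [eLpNorm_lt_top_iff_lintegral_rpow_enorm_lt_top hp0 hpt, lintegral_add_measure]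
  exact ENNReal.add_lt_top.mpr
    ⟨(eLpNorm_lt_top_iff_lintegral_rpow_enorm_lt_top hp0 hpt).mp h1.2,
     (eLpNorm_lt_top_iff_lintegral_rpow_enorm_lt_top hp0 hpt).mp h2.2⟩

lemma stepFun_fst_eq_on (c : ℕ → ℝ) (k : ℕ) (z : ℝ × ℝ) (hz : z ∈ Qblk k) :
    stepFun c z.1 = c k := stepFun_eq_on hz.1

lemma stepFun_snd_eq_on (c : ℕ → ℝ) (k : ℕ) (z : ℝ × ℝ) (hz : z ∈ Qblk k) :
    stepFun c z.2 = c k := stepFun_eq_on hz.2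

lemma wMeasure2_decomp (w₀ : ℝ × ℝ → ℝ) (hw₀ : Measurable w₀) (hw₀n : ∀ z, 0 ≤ w₀ z)
    (θ : ℕ → ℝ) (hθ : ∀ k, 0 ≤ θ k) (α : ℝ) (hα0 : 0 ≤ α) (hα1 : α ≤ 1) :
    wMeasure2 (fun z => α * w₀ z + (1 - α) * diagDensity θ z) =
      (ENNReal.ofReal α) • wMeasure2 w₀ +
        (ENNReal.ofReal (1 - α)) • wMeasure2 (diagDensity θ) := by
  unfold wMeasure2
  have h1 : (fun z : ℝ × ℝ => ENNReal.ofReal (α * w₀ z + (1 - α) * diagDensity θ z)) =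
      (ENNReal.ofReal α • fun z => ENNReal.ofReal (w₀ z)) +
        (ENNReal.ofReal (1 - α) • fun z => ENNReal.ofReal (diagDensity θ z)) := by
    funext z
    simp only [Pi.add_apply, Pi.smul_apply, smul_eq_mul]
    rw [ENNReal.ofReal_add (mul_nonneg hα0 (hw₀n z))
      (mul_nonneg (by linarith) (diag_nonneg hθ z)),
      ENNReal.ofReal_mul hα0, ENNReal.ofReal_mul (by linarith)]
  have hm0 : Measurable fun z : ℝ × ℝ => ENNReal.ofReal (w₀ z) :=
    ENNReal.measurable_ofReal.comp hw₀
  have hmd : Measurable fun z : ℝ × ℝ => ENNReal.ofReal (diagDensity θ z) :=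
    ENNReal.measurable_ofReal.comp (measurable_diagDensity θ)
  rw [h1, withDensity_add_left (hm0.const_smul _),
    withDensity_smul _ hm0, withDensity_smul _ hmd]

/-- the counterexample of Section `sec: counter`, in detail: mixing a
background density `w₀` with a diagonal singular part built from `(θ_i)` produces, for
every `α ∈ (0,1)`, a strictly positive density `w` for which the step functions `f`, `g`
satisfy `f(x), g(y) ∈ L^1(w)`, `f(x)+g(y) ∈ L^q(w)` but `f(x), g(y) ∉ L^q(w)`;
hence `w` fails the Smirnov property for `q`. -/
theorem counterexample_construction
    (q : ℝ) (hq : 1 < q)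
    (w₀ : ℝ × ℝ → ℝ) (hw₀ : IsDensity2 w₀)
    (θ : ℕ → ℝ) (hθpos : ∀ k, 0 < θ k) (hθsum : HasSum θ 1)
    (fc gc : ℕ → ℝ)
    (hfq0 : MemLp (fun z : ℝ × ℝ => stepFun fc z.1) (ENNReal.ofReal q) (wMeasure2 w₀))
    (hgq0 : MemLp (fun z : ℝ × ℝ => stepFun gc z.2) (ENNReal.ofReal q) (wMeasure2 w₀))
    (hfdiv : ¬ Summable (fun k => |fc k| ^ q * θ k))
    (hgdiv : ¬ Summable (fun k => |gc k| ^ q * θ k))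
    (hfl1 : Summable (fun k => |fc k| * θ k))
    (hgl1 : Summable (fun k => |gc k| * θ k))
    (hsumq : Summable (fun k => |fc k + gc k| ^ q * θ k))
    (α : ℝ) (hα0 : 0 < α) (hα1 : α < 1) :
    IsDensity2 (fun z => α * w₀ z + (1 - α) * diagDensity θ z) ∧
    MemLp (fun z : ℝ × ℝ => stepFun fc z.1) 1
      (wMeasure2 (fun z => α * w₀ z + (1 - α) * diagDensity θ z)) ∧
    MemLp (fun z : ℝ × ℝ => stepFun gc z.2) 1
      (wMeasure2 (fun z => α * w₀ z + (1 - α) * diagDensity θ z)) ∧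
    MemLp (fun z : ℝ × ℝ => stepFun fc z.1 + stepFun gc z.2) (ENNReal.ofReal q)
      (wMeasure2 (fun z => α * w₀ z + (1 - α) * diagDensity θ z)) ∧
    ¬ MemLp (fun z : ℝ × ℝ => stepFun fc z.1) (ENNReal.ofReal q)
      (wMeasure2 (fun z => α * w₀ z + (1 - α) * diagDensity θ z)) ∧
    ¬ MemLp (fun z : ℝ × ℝ => stepFun gc z.2) (ENNReal.ofReal q)
      (wMeasure2 (fun z => α * w₀ z + (1 - α) * diagDensity θ z)) ∧
    ¬ SmirnovProperty2 (fun z => α * w₀ z + (1 - α) * diagDensity θ z) q := by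
  obtain ⟨hw₀m, hw₀pos, hw₀int⟩ := hw₀
  have hθnn : ∀ k, 0 ≤ θ k := fun k => (hθpos k).le
  have hq0 : (0:ℝ) < q := by linarith
  -- integrability of w₀
  have hw₀i : Integrable w₀ volume := by
    by_contra h
    rw [integral_undef h] at hw₀int
    exact one_ne_zero hw₀int.symm
  -- measurability of the step functions on ℝ²
  have hfm : Measurable (fun z : ℝ × ℝ => stepFun fc z.1) :=
    (measurable_stepFun fc).comp measurable_fst
  have hgm : Measurable (fun z : ℝ × ℝ => stepFun gc z.2) :=
    (measurable_stepFun gc).comp measurable_snd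
  -- diag density integral
  have hdiag_lint : (∫⁻ z, ENNReal.ofReal (diagDensity θ z)) = 1 := by
    have h1 : (∫⁻ z, (1:ℝ≥0∞) ∂(wMeasure2 (diagDensity θ))) = ∑' k : ℕ, 1 * ENNReal.ofReal (θ k) :=
      lint_diag θ hθnn _ measurable_const (fun _ => 1) (fun k z hz => rfl)
    have h2 : (∫⁻ z, (1:ℝ≥0∞) ∂(wMeasure2 (diagDensity θ))) =
        ∫⁻ z, ENNReal.ofReal (diagDensity θ z) := by
      rw [lintegral_one]
      unfold wMeasure2
      rw [withDensity_apply _ MeasurableSet.univ, Measure.restrict_univ]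
    rw [← h2, h1]
    simp only [one_mul]
    rw [← ENNReal.ofReal_tsum_of_nonneg hθnn hθsum.summable, hθsum.tsum_eq]
    exact ENNReal.ofReal_one
  have hdiagi : Integrable (diagDensity θ) volume := by
    refine ⟨(measurable_diagDensity θ).aestronglyMeasurable, ?_⟩
    rw [HasFiniteIntegral]
    have : ∀ z, ‖diagDensity θ z‖ₑ = ENNReal.ofReal (diagDensity θ z) := fun z =>
      Real.enorm_eq_ofReal (diag_nonneg hθnn z)
    rw [lintegral_congr this, hdiag_lint]
    exact ENNReal.one_lt_top
  have hdiag_int : (∫ z, diagDensity θ z) = 1 := by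
    rw [integral_eq_lintegral_of_nonneg_ae (Filter.Eventually.of_forall (diag_nonneg hθnn))
      (measurable_diagDensity θ).aestronglyMeasurable, hdiag_lint]
    exact ENNReal.toReal_one
  -- the density w
  set w : ℝ × ℝ → ℝ := fun z => α * w₀ z + (1 - α) * diagDensity θ z with hw
  have hwm : Measurable w := (hw₀m.const_mul α).add ((measurable_diagDensity θ).const_mul (1 - α))
  have hdensity : IsDensity2 w := by
    refine ⟨hwm, fun z => ?_, ?_⟩
    · exact add_pos_of_pos_of_nonneg (mul_pos hα0 (hw₀pos z))
        (mul_nonneg (by linarith) (diag_nonneg hθnn z))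
    · rw [integral_add (hw₀i.const_mul α) (hdiagi.const_mul (1 - α)),
        integral_const_mul, integral_const_mul, hw₀int, hdiag_int]
      ring
  -- measure decomposition
  have hdecomp : wMeasure2 w =
      (ENNReal.ofReal α) • wMeasure2 w₀ +
        (ENNReal.ofReal (1 - α)) • wMeasure2 (diagDensity θ) :=
    wMeasure2_decomp w₀ hw₀m (fun z => (hw₀pos z).le) θ hθnn α hα0.le hα1.le
  have hb0 : ENNReal.ofReal (1 - α) ≠ 0 := by
    simp only [ne_eq, ENNReal.ofReal_eq_zero, not_le]
    linarith
  have hbt : ENNReal.ofReal (1 - α) ≠ ⊤ := ENNReal.ofReal_ne_top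
  have hat : ENNReal.ofReal α ≠ ⊤ := ENNReal.ofReal_ne_top
  -- finiteness of wMeasure2 w₀
  have hfin : IsFiniteMeasure (wMeasure2 w₀) := by
    constructor
    unfold wMeasure2
    rw [withDensity_apply _ MeasurableSet.univ, Measure.restrict_univ,
      ← ofReal_integral_eq_lintegral_ofReal hw₀i
        (Filter.Eventually.of_forall (fun z => (hw₀pos z).le))]
    exact ENNReal.ofReal_lt_top
  haveI := hfin
  have hq1le : (1 : ℝ≥0∞) ≤ ENNReal.ofReal q := by
    rw [← ENNReal.ofReal_one]
    exact ENNReal.ofReal_le_ofReal hq.le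
  have hqne0 : (ENNReal.ofReal q) ≠ 0 := by
    simp only [ne_eq, ENNReal.ofReal_eq_zero, not_le]; linarith
  -- from MemLp wrt the mixture to MemLp wrt the diagonal part
  have extract_diag : ∀ (u : ℝ × ℝ → ℝ) (p : ℝ≥0∞), MemLp u p (wMeasure2 w) →
      MemLp u p (wMeasure2 (diagDensity θ)) := by
    intro u p hu
    rw [hdecomp] at hu
    have h1 : MemLp u p ((ENNReal.ofReal (1 - α)) • wMeasure2 (diagDensity θ)) :=
      hu.right_of_add_measure
    have h2 := h1.smul_measure (c := (ENNReal.ofReal (1 - α))⁻¹) (ENNReal.inv_ne_top.mpr hb0)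
    rwa [smul_smul, ENNReal.inv_mul_cancel hb0 hbt, one_smul] at h2
  -- combine MemLp on the two parts
  have combine : ∀ (u : ℝ × ℝ → ℝ) (p : ℝ≥0∞), p ≠ 0 → p ≠ ⊤ → Measurable u →
      MemLp u p (wMeasure2 w₀) → MemLp u p (wMeasure2 (diagDensity θ)) →
      MemLp u p (wMeasure2 w) := by
    intro u p hp0 hpt hum h1 h2
    rw [hdecomp]
    exact memLp_add_meas hp0 hpt hum.aestronglyMeasurable
      (h1.smul_measure hat) (h2.smul_measure hbt)
  -- L¹ facts
  have hfL1d : MemLp (fun z : ℝ × ℝ => stepFun fc z.1) 1 (wMeasure2 (diagDensity θ)) := by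
    rw [← ENNReal.ofReal_one]
    rw [memLp_diag_iff θ hθnn one_pos _ hfm fc (stepFun_fst_eq_on fc)]
    refine hfl1.congr (fun k => ?_)
    rw [Real.rpow_one]
  have hgL1d : MemLp (fun z : ℝ × ℝ => stepFun gc z.2) 1 (wMeasure2 (diagDensity θ)) := by
    rw [← ENNReal.ofReal_one]
    rw [memLp_diag_iff θ hθnn one_pos _ hgm gc (stepFun_snd_eq_on gc)]
    refine hgl1.congr (fun k => ?_)
    rw [Real.rpow_one]
  have hfL1 : MemLp (fun z : ℝ × ℝ => stepFun fc z.1) 1 (wMeasure2 w) :=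
    combine _ 1 one_ne_zero ENNReal.one_ne_top hfm
      (hfq0.mono_exponent hq1le) hfL1d
  have hgL1 : MemLp (fun z : ℝ × ℝ => stepFun gc z.2) 1 (wMeasure2 w) :=
    combine _ 1 one_ne_zero ENNReal.one_ne_top hgm
      (hgq0.mono_exponent hq1le) hgL1d
  -- Lq of the sum
  have hsum_d : MemLp (fun z : ℝ × ℝ => stepFun fc z.1 + stepFun gc z.2) (ENNReal.ofReal q)
      (wMeasure2 (diagDensity θ)) := by
    rw [memLp_diag_iff θ hθnn hq0 (fun z : ℝ × ℝ => stepFun fc z.1 + stepFun gc z.2) (hfm.add hgm) (fun k => fc k + gc k)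
      (fun k z hz => by rw [stepFun_fst_eq_on fc k z hz, stepFun_snd_eq_on gc k z hz])]
    exact hsumq
  have hsumLq : MemLp (fun z : ℝ × ℝ => stepFun fc z.1 + stepFun gc z.2) (ENNReal.ofReal q)
      (wMeasure2 w) :=
    combine _ _ hqne0 ENNReal.ofReal_ne_top (hfm.add hgm) (hfq0.add hgq0) hsum_d
  -- failure of Lq for f and g
  have hfnot : ¬ MemLp (fun z : ℝ × ℝ => stepFun fc z.1) (ENNReal.ofReal q) (wMeasure2 w) := by
    intro h
    exact hfdiv ((memLp_diag_iff θ hθnn hq0 _ hfm fc (stepFun_fst_eq_on fc)).mp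
      (extract_diag _ _ h))
  have hgnot : ¬ MemLp (fun z : ℝ × ℝ => stepFun gc z.2) (ENNReal.ofReal q) (wMeasure2 w) := by
    intro h
    exact hgdiv ((memLp_diag_iff θ hθnn hq0 _ hgm gc (stepFun_snd_eq_on gc)).mp
      (extract_diag _ _ h))
  refine ⟨hdensity, hfL1, hgL1, hsumLq, hfnot, hgnot, ?_⟩
  intro hS
  exact hfnot (hS (stepFun fc) (stepFun gc) (measurable_stepFun fc) (measurable_stepFun gc)
    hfL1 hgL1 hsumLq).1
end
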